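/- arXiv:2202.06370 — 3 statements merged into one kernel-verified Lean document; each statement's English description precedes it below -/
import Mathlib

section
/- Let Γ₁ ⊆ ℝⁿ and Γ₂ ⊆ ℝᵐ be compact sets equipped with the restriction of Lebesgue measure, let Γ = Γ₁ × Γ₂, and let H = L²(Γ₁) × L²(Γ). Define J: H → H by J(e₁, e₂) = (−A e₂, B e₁), where A is the partial-integration operator and B the extension operator, and let D = {(e, J e) : e ∈ H} ⊆ H × H. Then D is isotropic for the pairing ⟪(e, f), (e', f')⟫ = ⟨e, f'⟩_H + ⟨e', f⟩_H, i.e. ⟪a, b⟫ = 0 for all a, b ∈ D. In particular, every element (e, f) ∈ D satisfies the power balance ⟨e₁, f₁⟩_{L²(Γ₁)} + ⟨e₂, f₂⟩_{L²(Γ)} = 0, so the interconnection is energy preserving. -/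
open MeasureTheory RealInnerProductSpace

/-- The symmetric pairing `⟪(e, f), (e', f')⟫ = ⟨e, f'⟩_H + ⟨e', f⟩_H` on `H × H`, where
`H = H₁ × H₂` carries the product inner product
`⟨(a₁,a₂),(b₁,b₂)⟩_H = ⟨a₁,b₁⟩ + ⟨a₂,b₂⟩`. -/
noncomputable def bondPairing {H₁ H₂ : Type*}
    [NormedAddCommGroup H₁] [InnerProductSpace ℝ H₁]
    [NormedAddCommGroup H₂] [InnerProductSpace ℝ H₂]
    (a b : (H₁ × H₂) × (H₁ × H₂)) : ℝ :=
  (⟪a.1.1, b.2.1⟫ + ⟪a.1.2, b.2.2⟫) + (⟪b.1.1, a.2.1⟫ + ⟪b.1.2, a.2.2⟫)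

set_option maxHeartbeats 2000000 in
/-- The graph `D = {(e, Je) : e ∈ H}` of `J(e₁,e₂) = (−Ae₂, Be₁)` on
`H = L²(Γ₁) × L²(Γ)` is isotropic for the pairing `⟪(e,f),(e',f')⟫ = ⟨e,f'⟩_H + ⟨e',f⟩_H`;
in particular every `(e, f) ∈ D` satisfies the power balance
`⟨e₁, f₁⟩_{L²(Γ₁)} + ⟨e₂, f₂⟩_{L²(Γ)} = 0`, so the interconnection is energy preserving. -/
theorem coupling_graph_isotropic_and_energy_preserving
    (n m : ℕ) (Γ₁ : Set (EuclideanSpace ℝ (Fin n))) (Γ₂ : Set (EuclideanSpace ℝ (Fin m)))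
    (hΓ₁ : IsCompact Γ₁) (hΓ₂ : IsCompact Γ₂)
    (A : Lp ℝ 2 ((volume.restrict Γ₁).prod (volume.restrict Γ₂)) →L[ℝ]
        Lp ℝ 2 (volume.restrict Γ₁))
    (B : Lp ℝ 2 (volume.restrict Γ₁) →L[ℝ]
        Lp ℝ 2 ((volume.restrict Γ₁).prod (volume.restrict Γ₂)))
    (hA : ∀ u, (A u : _ → ℝ) =ᵐ[volume.restrict Γ₁]
        fun x₁ => ∫ x₂, u (x₁, x₂) ∂(volume.restrict Γ₂))
    (hB : ∀ v, (B v : _ → ℝ) =ᵐ[(volume.restrict Γ₁).prod (volume.restrict Γ₂)]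
        fun p : EuclideanSpace ℝ (Fin n) × EuclideanSpace ℝ (Fin m) => v p.1)
    (D : Set ((Lp ℝ 2 (volume.restrict Γ₁) ×
          Lp ℝ 2 ((volume.restrict Γ₁).prod (volume.restrict Γ₂))) ×
        (Lp ℝ 2 (volume.restrict Γ₁) ×
          Lp ℝ 2 ((volume.restrict Γ₁).prod (volume.restrict Γ₂)))))
    (hD : D = {p | p.2 = (-(A p.1.2), B p.1.1)}) :
    (∀ a ∈ D, ∀ b ∈ D, bondPairing a b = 0) ∧
      ∀ a ∈ D, ⟪a.1.1, a.2.1⟫ + ⟪a.1.2, a.2.2⟫ = 0 := by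
  have hadj : ∀ (u : Lp ℝ 2 ((volume.restrict Γ₁).prod (volume.restrict Γ₂)))
      (v : Lp ℝ 2 (volume.restrict Γ₁)), ⟪A u, v⟫ = ⟪u, B v⟫ := by
    intro u v
    rw [L2.inner_def, L2.inner_def]
    have h1 : ∫ x, ⟪(A u : _ → ℝ) x, (v : _ → ℝ) x⟫ ∂(volume.restrict Γ₁)
        = ∫ x, (∫ x₂, u (x, x₂) ∂(volume.restrict Γ₂)) * v x ∂(volume.restrict Γ₁) := by
      refine integral_congr_ae ?_
      filter_upwards [hA u] with x hx
      simp [hx, RCLike.inner_apply, mul_comm]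
    rw [h1]
    have hint : Integrable (fun p => (u : _ → ℝ) p * (B v : _ → ℝ) p)
        ((volume.restrict Γ₁).prod (volume.restrict Γ₂)) := by
      have := L2.integrable_inner (𝕜 := ℝ) u (B v)
      simpa [RCLike.inner_apply, mul_comm] using this
    have hint2 : Integrable
        (fun p : EuclideanSpace ℝ (Fin n) × EuclideanSpace ℝ (Fin m) => (u : _ → ℝ) p * v p.1)
        ((volume.restrict Γ₁).prod (volume.restrict Γ₂)) := by
      refine hint.congr ?_
      filter_upwards [hB v] with p hp
      rw [hp]
    have h2 : ∫ p, ⟪(u : _ → ℝ) p, (B v : _ → ℝ) p⟫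
          ∂((volume.restrict Γ₁).prod (volume.restrict Γ₂))
        = ∫ p, (u : _ → ℝ) p * v p.1 ∂((volume.restrict Γ₁).prod (volume.restrict Γ₂)) := by
      refine integral_congr_ae ?_
      filter_upwards [hB v] with p hp
      simp [hp, RCLike.inner_apply, mul_comm]
    rw [h2, integral_prod _ hint2]
    refine integral_congr_ae (Filter.Eventually.of_forall fun x => ?_)
    simp [integral_mul_const]
  subst hD
  constructor
  · rintro a ha b hb
    simp only [Set.mem_setOf_eq] at ha hb
    simp only [bondPairing, ha, hb]
    rw [← hadj a.1.2 b.1.1, ← hadj b.1.2 a.1.1, inner_neg_right, inner_neg_right,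
      real_inner_comm (A a.1.2) b.1.1, real_inner_comm (A b.1.2) a.1.1]
    abel
  · rintro a ha
    simp only [Set.mem_setOf_eq] at ha
    rw [ha]
    simp only [inner_neg_right]
    rw [← hadj a.1.2 a.1.1, real_inner_comm (A a.1.2) a.1.1]
    abel
end

section
/- Let Γ₁ ⊆ ℝⁿ and Γ₂ ⊆ ℝᵐ be compact sets equipped with the restriction of Lebesgue measure, let Γ = Γ₁ × Γ₂, and let H = L²(Γ₁) × L²(Γ). Define J: H → H by J(e₁, e₂) = (−A e₂, B e₁), where A is the partial-integration operator and B the extension operator. Then the graph D = {(e, J e) : e ∈ H} ⊆ H × H is a Dirac structure: D = D^⊥, where D^⊥ = {a ∈ H × H : ⟪a, b⟫ = 0 for all b ∈ D} is the orthogonal companion with respect to the pairing ⟪(e, f), (e', f')⟫ = ⟨e, f'⟩_H + ⟨e', f⟩_H. -/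
open MeasureTheory RealInnerProductSpace

section Aux

variable {n m : ℕ} {Γ₁ : Set (EuclideanSpace ℝ (Fin n))} {Γ₂ : Set (EuclideanSpace ℝ (Fin m))}

/-- `A` and `B` are mutually adjoint. -/
lemma adjoint_AB
    (A : Lp ℝ 2 ((volume.restrict Γ₁).prod (volume.restrict Γ₂)) →L[ℝ]
        Lp ℝ 2 (volume.restrict Γ₁))
    (B : Lp ℝ 2 (volume.restrict Γ₁) →L[ℝ]
        Lp ℝ 2 ((volume.restrict Γ₁).prod (volume.restrict Γ₂)))
    (hA : ∀ u, (A u : _ → ℝ) =ᵐ[volume.restrict Γ₁]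
        fun x₁ => ∫ x₂, u (x₁, x₂) ∂(volume.restrict Γ₂))
    (hB : ∀ v, (B v : _ → ℝ) =ᵐ[(volume.restrict Γ₁).prod (volume.restrict Γ₂)]
        fun p : EuclideanSpace ℝ (Fin n) × EuclideanSpace ℝ (Fin m) => v p.1)
    (u : Lp ℝ 2 ((volume.restrict Γ₁).prod (volume.restrict Γ₂)))
    (v : Lp ℝ 2 (volume.restrict Γ₁)) :
    ⟪A u, v⟫ = ⟪u, B v⟫ := by
  have hint : Integrable (fun p => u p * (B v) p)
      ((volume.restrict Γ₁).prod (volume.restrict Γ₂)) := by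
    simpa [RCLike.inner_apply, mul_comm] using L2.integrable_inner (𝕜 := ℝ) u (B v)
  have hint' : Integrable
      (fun p : EuclideanSpace ℝ (Fin n) × EuclideanSpace ℝ (Fin m) => u p * v p.1)
      ((volume.restrict Γ₁).prod (volume.restrict Γ₂)) := by
    refine hint.congr ?_
    filter_upwards [hB v] with p hp using by rw [hp]
  have h1 : ⟪u, B v⟫ = ∫ p, u p * v p.1
      ∂((volume.restrict Γ₁).prod (volume.restrict Γ₂)) := by
    rw [L2.inner_def]
    simp only [RCLike.inner_apply, conj_trivial]
    refine integral_congr_ae ?_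
    filter_upwards [hB v] with p hp using by rw [hp, mul_comm]
  have h2 : ∫ p, u p * v p.1 ∂((volume.restrict Γ₁).prod (volume.restrict Γ₂))
      = ∫ x₁, (∫ x₂, u (x₁, x₂) ∂(volume.restrict Γ₂)) * v x₁ ∂(volume.restrict Γ₁) := by
    rw [integral_prod _ hint']
    exact integral_congr_ae (Filter.Eventually.of_forall fun x₁ =>
      integral_mul_const (v x₁) (fun x₂ => u (x₁, x₂)))
  have h3 : ⟪A u, v⟫
      = ∫ x₁, (∫ x₂, u (x₁, x₂) ∂(volume.restrict Γ₂)) * v x₁ ∂(volume.restrict Γ₁) := by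
    rw [L2.inner_def]
    simp only [RCLike.inner_apply, conj_trivial]
    refine integral_congr_ae ?_
    filter_upwards [hA u] with x hx using by rw [hx, mul_comm]
  rw [h1, h2, h3]

end Aux

set_option maxHeartbeats 1000000

/-- **paper's main Theorem.** On `H = L²(Γ₁) × L²(Γ)` with
`J(e₁,e₂) = (−Ae₂, Be₁)` (partial-integration `A`, extension `B`), the graph
`D = {(e, Je) : e ∈ H}` equals its orthogonal companion
`D^⊥ = {a : ⟪a, b⟫ = 0 ∀ b ∈ D}` for `⟪(e,f),(e',f')⟫ = ⟨e,f'⟩_H + ⟨e',f⟩_H`;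
i.e. `D` is a Dirac structure. -/
theorem coupling_graph_is_dirac_structure
    (n m : ℕ) (Γ₁ : Set (EuclideanSpace ℝ (Fin n))) (Γ₂ : Set (EuclideanSpace ℝ (Fin m)))
    (hΓ₁ : IsCompact Γ₁) (hΓ₂ : IsCompact Γ₂)
    (A : Lp ℝ 2 ((volume.restrict Γ₁).prod (volume.restrict Γ₂)) →L[ℝ]
        Lp ℝ 2 (volume.restrict Γ₁))
    (B : Lp ℝ 2 (volume.restrict Γ₁) →L[ℝ]
        Lp ℝ 2 ((volume.restrict Γ₁).prod (volume.restrict Γ₂)))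
    (hA : ∀ u, (A u : _ → ℝ) =ᵐ[volume.restrict Γ₁]
        fun x₁ => ∫ x₂, u (x₁, x₂) ∂(volume.restrict Γ₂))
    (hB : ∀ v, (B v : _ → ℝ) =ᵐ[(volume.restrict Γ₁).prod (volume.restrict Γ₂)]
        fun p : EuclideanSpace ℝ (Fin n) × EuclideanSpace ℝ (Fin m) => v p.1)
    (D : Set ((Lp ℝ 2 (volume.restrict Γ₁) ×
          Lp ℝ 2 ((volume.restrict Γ₁).prod (volume.restrict Γ₂))) ×
        (Lp ℝ 2 (volume.restrict Γ₁) ×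
          Lp ℝ 2 ((volume.restrict Γ₁).prod (volume.restrict Γ₂)))))
    (hD : D = {p | p.2 = (-(A p.1.2), B p.1.1)}) :
    D = {a | ∀ b ∈ D, bondPairing a b = 0} := by
  have adj := adjoint_AB A B hA hB
  subst hD
  ext a
  obtain ⟨⟨e₁, e₂⟩, f₁, f₂⟩ := a
  simp only [Set.mem_setOf_eq]
  constructor
  · rintro ha b hb
    obtain ⟨⟨e₁', e₂'⟩, f'⟩ := b
    rw [bondPairing, ha, hb]
    rw [← adj e₂ e₁', ← adj e₂' e₁]
    simp only [inner_neg_right]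
    rw [real_inner_comm e₁ (A e₂'), real_inner_comm e₁' (A e₂)]
    ring
  · intro ha
    have hf₁ : f₁ = -(A e₂) := by
      have hb := ha ((f₁ + A e₂, 0), (-(A 0), B (f₁ + A e₂))) rfl
      rw [bondPairing] at hb
      simp only [map_zero, neg_zero, inner_zero_right, inner_zero_left, add_zero,
        zero_add, ← adj] at hb
      have h0 : ⟪f₁ + A e₂, f₁ + A e₂⟫ = 0 := by
        rw [inner_add_right]
        linarith [real_inner_comm (A e₂) (f₁ + A e₂)]
      exact eq_neg_of_add_eq_zero_left (inner_self_eq_zero.mp h0)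
    have hf₂ : f₂ = B e₁ := by
      have hb := ha ((0, f₂ - B e₁), (-(A (f₂ - B e₁)), B 0)) rfl
      rw [bondPairing] at hb
      simp only [map_zero, inner_zero_right, inner_zero_left, add_zero, zero_add,
        inner_neg_right] at hb
      have haux : ⟪e₁, A (f₂ - B e₁)⟫ = ⟪f₂ - B e₁, B e₁⟫ := by
        rw [← adj]; exact real_inner_comm _ _
      rw [haux] at hb
      have h0 : ⟪f₂ - B e₁, f₂ - B e₁⟫ = 0 := by
        rw [inner_sub_right]; linarith
      exact sub_eq_zero.mp (inner_self_eq_zero.mp h0)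
    simp only [hf₁, hf₂]
end

section
/- Let k, l ∈ ℕ, let M₁ ∈ ℝ^{k×k} and M₂ ∈ ℝ^{l×l} be symmetric positive definite matrices, and let D ∈ ℝ^{k×l}. Set M = diag(M₁, M₂) ∈ ℝ^{(k+l)×(k+l)} and J = [[0, −D],[Dᵀ, 0]] ∈ ℝ^{(k+l)×(k+l)}. Then the subspace 𝒟 = {(e, f) ∈ ℝ^{k+l} × ℝ^{k+l} : M f = J e} satisfies 𝒟 = 𝒟^⊥ with respect to the pairing ⟪(e, f), (e', f')⟫ = eᵀ M f' + e'ᵀ M f; that is, the finite-element-discretized interconnection relation M₁ u = D y, M₂ w = −Dᵀ v defines a finite-dimensional Dirac structure. -/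
open Matrix

/-- For symmetric positive definite `M₁ ∈ ℝ^{k×k}`, `M₂ ∈ ℝ^{l×l}` and a
coupling matrix `D ∈ ℝ^{k×l}`, set `M = diag(M₁, M₂)` and `J = [[0, −D],[Dᵀ, 0]]`. Then
`𝒟 = {(e, f) : M f = J e}` satisfies `𝒟 = 𝒟^⊥` for the pairing
`⟪(e,f),(e',f')⟫ = eᵀ M f' + e'ᵀ M f`; that is, the finite-element-discretized
interconnection `M₁ u = D y`, `M₂ w = −Dᵀ v` defines a finite-dimensional Dirac
structure. -/
theorem discretized_interconnection_is_dirac_structure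
    (k l : ℕ) (M₁ : Matrix (Fin k) (Fin k) ℝ) (M₂ : Matrix (Fin l) (Fin l) ℝ)
    (hM₁ : M₁.PosDef) (hM₂ : M₂.PosDef) (D : Matrix (Fin k) (Fin l) ℝ)
    (M : Matrix (Fin k ⊕ Fin l) (Fin k ⊕ Fin l) ℝ) (hM : M = Matrix.fromBlocks M₁ 0 0 M₂)
    (J : Matrix (Fin k ⊕ Fin l) (Fin k ⊕ Fin l) ℝ) (hJ : J = Matrix.fromBlocks 0 (-D) Dᵀ 0)
    (𝒟 : Set ((Fin k ⊕ Fin l → ℝ) × (Fin k ⊕ Fin l → ℝ)))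
    (h𝒟 : 𝒟 = {p | M.mulVec p.2 = J.mulVec p.1}) :
    𝒟 = {a | ∀ b ∈ 𝒟, a.1 ⬝ᵥ M.mulVec b.2 + b.1 ⬝ᵥ M.mulVec a.2 = 0} := by
  have hJs : Jᵀ = -J := by
    subst hJ
    rw [Matrix.fromBlocks_transpose]
    rw [show (0 : Matrix (Fin k) (Fin k) ℝ) = -0 from (neg_zero).symm,
      show Dᵀᵀ = -(-D) from by simp,
      show (-D)ᵀ = -Dᵀ from Matrix.transpose_neg D,
      show (0 : Matrix (Fin l) (Fin l) ℝ) = -0 from (neg_zero).symm,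
      Matrix.fromBlocks_neg]
    simp
  -- key skew-symmetry identity
  have key : ∀ x y : Fin k ⊕ Fin l → ℝ, x ⬝ᵥ J.mulVec y = -(y ⬝ᵥ J.mulVec x) := by
    intro x y
    rw [Matrix.dotProduct_mulVec, ← Matrix.mulVec_transpose, hJs, Matrix.neg_mulVec,
      neg_dotProduct, dotProduct_comm]
  -- inverse of M
  set Minv : Matrix (Fin k ⊕ Fin l) (Fin k ⊕ Fin l) ℝ := Matrix.fromBlocks M₁⁻¹ 0 0 M₂⁻¹ with hMinv
  have hMMinv : M * Minv = 1 := by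
    rw [hM, hMinv, Matrix.fromBlocks_multiply,
      Matrix.mul_nonsing_inv _ (isUnit_iff_ne_zero.mpr hM₁.det_pos.ne'), Matrix.mul_nonsing_inv _ (isUnit_iff_ne_zero.mpr hM₂.det_pos.ne')]
    simp
  ext a
  constructor
  · intro ha b hb
    rw [h𝒟] at ha hb
    rw [ha, hb, key]
    ring
  · intro ha
    rw [h𝒟]
    show M.mulVec a.2 = J.mulVec a.1
    have hzero : ∀ e : Fin k ⊕ Fin l → ℝ,
        e ⬝ᵥ (M.mulVec a.2 - J.mulVec a.1) = 0 := by
      intro e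
      have hb : (e, Minv.mulVec (J.mulVec e)) ∈ 𝒟 := by
        rw [h𝒟]
        show M.mulVec (Minv.mulVec (J.mulVec e)) = J.mulVec e
        rw [Matrix.mulVec_mulVec, hMMinv, Matrix.one_mulVec]
      have := ha _ hb
      simp only at this
      rw [Matrix.mulVec_mulVec, hMMinv, Matrix.one_mulVec] at this
      rw [dotProduct_sub]
      have h2 : a.1 ⬝ᵥ J.mulVec e = -(e ⬝ᵥ J.mulVec a.1) := key a.1 e
      linarith
    funext i
    have := hzero (Pi.single i 1)
    simpa [single_dotProduct, sub_eq_zero] using this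
end
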